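/- Let C ⊆ ℝ^d be a nonempty closed convex cone with C ≠ ℝ^d, and let ζ ∈ C⁺ \ {0}, where C⁺ = {ζ : ∀ z ∈ C, ζ·z ≥ 0}. For A, B ∈ F(ℝ^d, C), the ζ-difference A −_ζ B := {z ∈ ℝ^d : z + B ⊆ cl(A + H⁺(ζ))}, where H⁺(ζ) = {z : ζ·z ≥ 0}, satisfies A −_ζ B = {z ∈ ℝ^d : ζ·z + inf_{b ∈ B} ζ·b ≥ inf_{a ∈ A} ζ·a} (with the convention on extended reals for the infima, and assuming A, B nonempty). -/

import Mathlib

open Pointwise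

/-- for `ζ ∈ C⁺ \ {0}` and nonempty `A, B ∈ F(ℝ^d, C)`, the ζ-difference
`A −_ζ B = {z : z + B ⊆ cl(A + H⁺(ζ))}` coincides with
`{z : ζ·z + inf_{b∈B} ζ·b ≥ inf_{a∈A} ζ·a}` (infima in the extended reals). -/
theorem stmt1 {d : ℕ}
    (C : Set (EuclideanSpace ℝ (Fin d)))
    (hCne : C.Nonempty) (hCclosed : IsClosed C) (hCconv : Convex ℝ C)
    (hCcone : ∀ c ∈ C, ∀ s : ℝ, 0 ≤ s → s • c ∈ C)
    (hCproper : C ≠ Set.univ)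
    (ζ : EuclideanSpace ℝ (Fin d))
    (hζC : ∀ c ∈ C, 0 ≤ (inner ℝ ζ c : ℝ)) (hζ0 : ζ ≠ 0)
    (A B : Set (EuclideanSpace ℝ (Fin d)))
    (hAne : A.Nonempty) (hBne : B.Nonempty)
    (hA : IsClosed A ∧ A = closure (A + C))
    (hB : IsClosed B ∧ B = closure (B + C)) :
    {z : EuclideanSpace ℝ (Fin d) |
        ∀ b ∈ B, z + b ∈ closure (A + {w : EuclideanSpace ℝ (Fin d) | 0 ≤ (inner ℝ ζ w : ℝ)})} =
    {z : EuclideanSpace ℝ (Fin d) |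
        sInf ((fun a => ((inner ℝ ζ a : ℝ) : EReal)) '' A) ≤
          ((inner ℝ ζ z : ℝ) : EReal) + sInf ((fun b => ((inner ℝ ζ b : ℝ) : EReal)) '' B)} := by
  classical
  set H : Set (EuclideanSpace ℝ (Fin d)) := {w | 0 ≤ (inner ℝ ζ w : ℝ)} with hH
  set sA : EReal := sInf ((fun a => ((inner ℝ ζ a : ℝ) : EReal)) '' A) with hsA
  set sB : EReal := sInf ((fun b => ((inner ℝ ζ b : ℝ) : EReal)) '' B) with hsB
  have hopen : ∀ y : EuclideanSpace ℝ (Fin d),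
      sA < ((inner ℝ ζ y : ℝ) : EReal) → y ∈ A + H := by
    intro y hy
    rw [hsA, sInf_lt_iff] at hy
    obtain ⟨_, ⟨a, ha, rfl⟩, hlt⟩ := hy
    have hlt' : (inner ℝ ζ a : ℝ) < inner ℝ ζ y := EReal.coe_lt_coe_iff.mp hlt
    refine ⟨a, ha, y - a, ?_, by simp⟩
    simp only [hH, Set.mem_setOf_eq, inner_sub_right]
    linarith
  rcases eq_or_ne sA ⊥ with hbot | hbot
  · ext z
    simp only [Set.mem_setOf_eq, hbot]
    constructor
    · intro _; exact bot_le
    · intro _ b hb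
      refine subset_closure (hopen (z + b) ?_)
      rw [hbot]
      exact bot_lt_iff_ne_bot.mpr (by simp)
  · have htop : sA ≠ ⊤ := by
      obtain ⟨a, ha⟩ := hAne
      exact ne_top_of_le_ne_top (by simp) (sInf_le ⟨a, ha, rfl⟩)
    set m : ℝ := sA.toReal with hm
    have hmeq : (m : EReal) = sA := EReal.coe_toReal htop hbot
    have hζζ : (0:ℝ) < inner ℝ ζ ζ := by
      rw [real_inner_self_eq_norm_sq]
      have : 0 < ‖ζ‖ := norm_pos_iff.mpr hζ0
      positivity
    have hclos : closure (A + H) = {x | m ≤ (inner ℝ ζ x : ℝ)} := by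
      apply Set.Subset.antisymm
      · apply closure_minimal
        · rintro x ⟨a, ha, w, hw, rfl⟩
          have h1 : (m : EReal) ≤ ((inner ℝ ζ a : ℝ) : EReal) := by
            rw [hmeq]; exact sInf_le ⟨a, ha, rfl⟩
          have h1' : m ≤ (inner ℝ ζ a : ℝ) := by exact_mod_cast h1
          have h2 : 0 ≤ (inner ℝ ζ w : ℝ) := hw
          simp only [Set.mem_setOf_eq, inner_add_right]
          linarith
        · exact isClosed_le continuous_const (continuous_const.inner continuous_id)
      · intro x hx
        have hx' : m ≤ (inner ℝ ζ x : ℝ) := hx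
        have hseq : Filter.Tendsto (fun n : ℕ => x + (1/(n+1:ℝ)) • ζ) Filter.atTop (nhds x) := by
          have h0 : Filter.Tendsto (fun n : ℕ => (1/(n+1:ℝ))) Filter.atTop (nhds 0) :=
            tendsto_one_div_add_atTop_nhds_zero_nat
          have := (h0.smul_const ζ).const_add x
          simpa using this
        refine mem_closure_of_tendsto hseq (Filter.Eventually.of_forall fun n => ?_)
        apply hopen
        rw [← hmeq, EReal.coe_lt_coe_iff]
        have hval : (inner ℝ ζ (x + (1/(n+1:ℝ)) • ζ) : ℝ)
            = inner ℝ ζ x + (1/(n+1:ℝ)) * inner ℝ ζ ζ := by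
          simp [inner_add_right, inner_smul_right]
        have hpos : (0:ℝ) < 1/(n+1:ℝ) := by positivity
        have := mul_pos hpos hζζ
        rw [hval]; linarith
    ext z
    simp only [Set.mem_setOf_eq, hclos, ← hmeq]
    constructor
    · intro h
      have hle : ((m - inner ℝ ζ z : ℝ) : EReal) ≤ sB := by
        apply le_sInf
        rintro _ ⟨b, hb, rfl⟩
        have hmem := h b hb
        rw [inner_add_right] at hmem
        exact EReal.coe_le_coe_iff.mpr (by linarith : (m - inner ℝ ζ z : ℝ) ≤ inner ℝ ζ b)
      calc (m : EReal) = ((inner ℝ ζ z : ℝ) : EReal) + ((m - inner ℝ ζ z : ℝ) : EReal) := by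
            rw [← EReal.coe_add]; congr 1; ring
        _ ≤ ((inner ℝ ζ z : ℝ) : EReal) + sB := add_le_add_right hle _
    · intro h b hb
      have h1 : sB ≤ ((inner ℝ ζ b : ℝ) : EReal) := sInf_le ⟨b, hb, rfl⟩
      have h2 : (m : EReal) ≤ ((inner ℝ ζ z : ℝ) : EReal) + ((inner ℝ ζ b : ℝ) : EReal) :=
        le_trans h (add_le_add_right h1 _)
      rw [← EReal.coe_add, EReal.coe_le_coe_iff] at h2
      rw [inner_add_right]
      linarith
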